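/- The equation x·(y₁ + y₂) = z² is partition regular on ℕ with full injectivity: for every finite partition of ℕ there exist monochromatic, pairwise distinct natural numbers x, y₁, y₂, z with x·(y₁ + y₂) = z². -/

import Mathlib

/- `ℕ+` plays the role of the paper's `ℕ` (the positive integers). -/

open Combinatorics

/-- Finitary van der Waerden theorem for 3-term arithmetic progressions,
derived from the Hales–Jewett theorem. -/
theorem vdw3 (κ : Type) [Finite κ] :
    ∃ N : ℕ, ∀ f : ℕ → κ, ∃ a d : ℕ, 0 < d ∧ a + 2 * d ≤ N ∧
      f a = f (a + d) ∧ f a = f (a + 2 * d) := by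
  classical
  obtain ⟨ι, _inst, hι⟩ := Line.exists_mono_in_high_dimension (Fin 3) κ
  refine ⟨2 * Fintype.card ι, fun f => ?_⟩
  obtain ⟨l, c, hl⟩ := hι fun v => f (∑ i, (v i : ℕ))
  set s : Finset ι := Finset.univ.filter (fun i => l.idxFun i = none) with hs
  set T : ℕ := ∑ i ∈ sᶜ, ((l.idxFun i).map (fun (m : Fin 3) => (m : ℕ))).getD 0 with hT
  have key : ∀ x : Fin 3, ∑ i, ((l x) i : ℕ) = s.card * (x : ℕ) + T := by
    intro x
    rw [← Finset.sum_add_sum_compl s]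
    congr 1
    · calc ∑ i ∈ s, ((l x) i : ℕ) = ∑ _i ∈ s, (x : ℕ) := by
            refine Finset.sum_congr rfl fun i hi => ?_
            rw [hs, Finset.mem_filter] at hi
            rw [l.apply_none _ _ hi.right]
        _ = s.card * (x : ℕ) := by rw [Finset.sum_const, smul_eq_mul]
    · refine Finset.sum_congr rfl fun i hi => ?_
      have hi' : l.idxFun i ≠ none := by
        rw [Finset.mem_compl, hs, Finset.mem_filter] at hi
        intro h; exact hi ⟨Finset.mem_univ _, h⟩
      obtain ⟨y, hy⟩ := Option.ne_none_iff_exists.mp hi'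
      simp [Line.apply_def, ← hy]
  have hcard : 0 < s.card := by
    refine Finset.card_pos.mpr ⟨l.proper.choose, ?_⟩
    rw [hs, Finset.mem_filter]
    exact ⟨Finset.mem_univ _, l.proper.choose_spec⟩
  have hval : ∀ x : Fin 3, f (s.card * (x : ℕ) + T) = c := by
    intro x
    have := hl x
    simpa only [key x] using this
  have h0 := hval 0
  have h1 := hval 1
  have h2 := hval 2
  have c0 : ((0 : Fin 3) : ℕ) = 0 := rfl
  have c1 : ((1 : Fin 3) : ℕ) = 1 := rfl
  have c2 : ((2 : Fin 3) : ℕ) = 2 := rfl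
  rw [c0, Nat.mul_zero, Nat.zero_add] at h0
  rw [c1, Nat.mul_one] at h1
  rw [c2] at h2
  refine ⟨T, s.card, hcard, ?_, ?_, ?_⟩
  · have hb : (∑ i, ((l (2 : Fin 3)) i : ℕ)) ≤ ∑ _i : ι, 2 :=
      Finset.sum_le_sum fun i _ => Nat.lt_succ_iff.mp (Fin.is_lt _)
    rw [key 2, c2] at hb
    simp only [Finset.sum_const, Finset.card_univ, smul_eq_mul] at hb
    omega
  · rw [h0, show T + s.card = s.card + T by omega, h1]
  · rw [h0, show T + 2 * s.card = s.card * 2 + T by omega, h2]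

/-- Partial sums of a stream of positive integers. -/
def psum : Stream' ℕ+ → ℕ → ℕ+
  | a, 0 => a.head
  | a, k + 1 => a.head + psum a.tail k

theorem psum_mem : ∀ (k : ℕ) (a : Stream' ℕ+), psum a k ∈ Hindman.FS a := by
  intro k
  induction k with
  | zero => intro a; exact Hindman.FS.head a
  | succ k ih => intro a; exact Hindman.FS.cons a _ (ih a.tail)

theorem psum_succ : ∀ (k : ℕ) (a : Stream' ℕ+),
    psum a (k + 1) = psum a k + a.get (k + 1) := by
  intro k
  induction k with
  | zero =>
    intro a
    show a.head + psum a.tail 0 = a.head + a.get 1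
    rw [show psum a.tail 0 = a.tail.head from rfl]
    congr 1
  | succ k ih =>
    intro a
    show a.head + psum a.tail (k + 1) = (a.head + psum a.tail k) + a.get (k + 2)
    rw [ih a.tail, add_assoc]
    congr 1

theorem psum_ge (a : Stream' ℕ+) : ∀ k : ℕ, k + 1 ≤ (psum a k : ℕ) := by
  intro k
  induction k with
  | zero => exact (psum a 0).pos
  | succ k ih =>
    rw [psum_succ k a, PNat.add_coe]
    have h := (a.get (k + 1)).pos
    omega

/-- The equation `x·(y₁ + y₂) = z²` is partition regular on `ℕ` with full
injectivity: every finite coloring admits monochromatic pairwise distinct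
`x, y₁, y₂, z` with `x·(y₁ + y₂) = z²`. -/
theorem pr_x_mul_sum_eq_square :
    ∀ (r : ℕ) (C : ℕ+ → Fin r), ∃ x y₁ y₂ z : ℕ+,
      C x = C y₁ ∧ C x = C y₂ ∧ C x = C z ∧
      x ≠ y₁ ∧ x ≠ y₂ ∧ x ≠ z ∧ y₁ ≠ y₂ ∧ y₁ ≠ z ∧ y₂ ≠ z ∧
      x * (y₁ + y₂) = z ^ 2 := by
  intro r C
  rcases isEmpty_or_nonempty (Fin r) with h | h
  · exact (h.false (C 1)).elim
  obtain ⟨N, hN⟩ := vdw3 (Fin r)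
  -- product coloring recording the colors of the dilates `2^i * t`, `i ≤ N`
  set D : ℕ+ → (Fin (N + 1) → Fin r) := fun t i => C (2 ^ (i : ℕ) * t) with hD
  -- Hindman's theorem applied to the fibers of `D`
  obtain ⟨cell, hcell, a, hFS⟩ :=
    Hindman.exists_FS_of_finite_cover
      (Set.range fun v : Fin (N + 1) → Fin r => D ⁻¹' {v})
      (Set.finite_range _)
      (by intro t _; exact ⟨D ⁻¹' {D t}, ⟨D t, rfl⟩, rfl⟩)
  obtain ⟨v, rfl⟩ := hcell
  have hmono : ∀ t ∈ Hindman.FS a, D t = v := fun t ht => hFS ht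
  -- van der Waerden applied to the common color vector `v`
  obtain ⟨α, d, hd, hle, h1, h2⟩ :=
    hN fun i => v ⟨min i N, Nat.lt_succ_of_le (Nat.min_le_right i N)⟩
  set γ := α + d with hγ
  set β := α + 2 * d with hβ
  have hαN : α ≤ N := by omega
  have hγN : γ ≤ N := by omega
  have hβN : β ≤ N := by omega
  -- the three elements from Hindman: `n₁`, a huge `n₂`, and `m = n₁ + n₂`
  set n₁ : ℕ+ := a.head with hn₁
  set k : ℕ := 2 ^ β * (n₁ : ℕ) with hk
  set n₂ : ℕ+ := psum a.tail k with hn₂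
  set m : ℕ+ := n₁ + n₂ with hm
  have hn₁FS : n₁ ∈ Hindman.FS a := Hindman.FS.head a
  have hn₂FS : n₂ ∈ Hindman.FS a := Hindman.FS.tail a _ (psum_mem k a.tail)
  have hmFS : m ∈ Hindman.FS a := Hindman.FS.cons a _ (psum_mem k a.tail)
  have hbig : 2 ^ β * (n₁ : ℕ) < (n₂ : ℕ) := by
    have hge : k + 1 ≤ (n₂ : ℕ) := psum_ge a.tail k
    rw [hk] at hge
    omega
  -- color bookkeeping
  have colct : ∀ (t : ℕ+) (i : ℕ) (hi : i ≤ N), t ∈ Hindman.FS a →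
      C (2 ^ i * t) = v ⟨i, Nat.lt_succ_of_le hi⟩ := by
    intro t i hi ht
    have h := congrFun (hmono t ht) ⟨i, Nat.lt_succ_of_le hi⟩
    rw [hD] at h
    simpa using h
  have hv : ∀ (i : ℕ) (hi : i ≤ N),
      v ⟨min i N, Nat.lt_succ_of_le (Nat.min_le_right i N)⟩ =
      v ⟨i, Nat.lt_succ_of_le hi⟩ := by
    intro i hi
    congr 1
    apply Fin.ext
    simp [Nat.min_eq_left hi]
  have hvαγ : v ⟨α, Nat.lt_succ_of_le hαN⟩ = v ⟨γ, Nat.lt_succ_of_le hγN⟩ := by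
    rw [← hv α hαN, ← hv γ hγN]; exact h1
  have hvαβ : v ⟨α, Nat.lt_succ_of_le hαN⟩ = v ⟨β, Nat.lt_succ_of_le hβN⟩ := by
    rw [← hv α hαN, ← hv β hβN]; exact h2
  -- numeric abbreviations
  have c2 : ((2 : ℕ+) : ℕ) = 2 := rfl
  have hmc : (m : ℕ) = (n₁ : ℕ) + (n₂ : ℕ) := by rw [hm, PNat.add_coe]
  have cx : ((2 ^ α * m : ℕ+) : ℕ) = 2 ^ α * ((n₁ : ℕ) + (n₂ : ℕ)) := by
    rw [PNat.mul_coe, PNat.pow_coe, c2, hmc]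
  have cz : ((2 ^ γ * m : ℕ+) : ℕ) = 2 ^ γ * ((n₁ : ℕ) + (n₂ : ℕ)) := by
    rw [PNat.mul_coe, PNat.pow_coe, c2, hmc]
  have cy1 : ((2 ^ β * n₁ : ℕ+) : ℕ) = 2 ^ β * (n₁ : ℕ) := by
    rw [PNat.mul_coe, PNat.pow_coe, c2]
  have cy2 : ((2 ^ β * n₂ : ℕ+) : ℕ) = 2 ^ β * (n₂ : ℕ) := by
    rw [PNat.mul_coe, PNat.pow_coe, c2]
  have e1 : (1 : ℕ) ≤ (n₁ : ℕ) := n₁.pos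
  have e2 : (1 : ℕ) ≤ 2 ^ α := Nat.one_le_two_pow
  have e2' : (1 : ℕ) ≤ 2 ^ γ := Nat.one_le_two_pow
  have e3 : (2 : ℕ) ^ α < 2 ^ γ := Nat.pow_lt_pow_right (by norm_num) (by omega)
  have e5 : 2 * 2 ^ α ≤ (2 : ℕ) ^ β := by
    calc 2 * 2 ^ α = 2 ^ (α + 1) := by ring
      _ ≤ 2 ^ β := Nat.pow_le_pow_right (by norm_num) (by omega)
  have e6 : 2 * 2 ^ γ ≤ (2 : ℕ) ^ β := by
    calc 2 * 2 ^ γ = 2 ^ (γ + 1) := by ring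
      _ ≤ 2 ^ β := Nat.pow_le_pow_right (by norm_num) (by omega)
  have ppos : (0 : ℕ) < 2 ^ β := by positivity
  have pposa : (0 : ℕ) < 2 ^ α := by positivity
  have pposg : (0 : ℕ) < 2 ^ γ := by positivity
  have e7 : (n₁ : ℕ) < (n₂ : ℕ) := by
    have h' : (n₁ : ℕ) ≤ 2 ^ β * (n₁ : ℕ) := le_mul_of_one_le_left (Nat.zero_le _) Nat.one_le_two_pow
    omega
  set n1c := (n₁ : ℕ)
  set n2c := (n₂ : ℕ)
  have psum_pos : (0 : ℕ) < n1c + n2c := by omega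
  have L1 : 2 ^ β * n1c < 2 ^ α * (n1c + n2c) := by
    calc 2 ^ β * n1c < n2c := hbig
      _ ≤ n1c + n2c := Nat.le_add_left _ _
      _ ≤ 2 ^ α * (n1c + n2c) := le_mul_of_one_le_left (Nat.zero_le _) e2
  have L5 : 2 ^ β * n1c < 2 ^ γ * (n1c + n2c) := by
    calc 2 ^ β * n1c < n2c := hbig
      _ ≤ n1c + n2c := Nat.le_add_left _ _
      _ ≤ 2 ^ γ * (n1c + n2c) := le_mul_of_one_le_left (Nat.zero_le _) e2'
  have L2 : 2 ^ α * (n1c + n2c) < 2 ^ β * n2c := by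
    have hlt : 2 ^ α * n1c < 2 ^ α * n2c := mul_lt_mul_of_pos_left e7 pposa
    calc 2 ^ α * (n1c + n2c) = 2 ^ α * n1c + 2 ^ α * n2c := by ring
      _ < 2 ^ α * n2c + 2 ^ α * n2c := by omega
      _ = (2 * 2 ^ α) * n2c := by ring
      _ ≤ 2 ^ β * n2c := Nat.mul_le_mul_right _ e5
  have L6 : 2 ^ γ * (n1c + n2c) < 2 ^ β * n2c := by
    have hlt : 2 ^ γ * n1c < 2 ^ γ * n2c := mul_lt_mul_of_pos_left e7 pposg
    calc 2 ^ γ * (n1c + n2c) = 2 ^ γ * n1c + 2 ^ γ * n2c := by ring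
      _ < 2 ^ γ * n2c + 2 ^ γ * n2c := by omega
      _ = (2 * 2 ^ γ) * n2c := by ring
      _ ≤ 2 ^ β * n2c := Nat.mul_le_mul_right _ e6
  have L3 : 2 ^ α * (n1c + n2c) < 2 ^ γ * (n1c + n2c) := mul_lt_mul_of_pos_right e3 psum_pos
  have L4 : 2 ^ β * n1c < 2 ^ β * n2c := mul_lt_mul_of_pos_left e7 ppos
  have pne : ∀ {u w : ℕ+}, (u : ℕ) < (w : ℕ) → u ≠ w :=
    fun h => ne_of_lt ((PNat.coe_lt_coe _ _).mp h)
  have pne' : ∀ {u w : ℕ+}, (w : ℕ) < (u : ℕ) → u ≠ w :=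
    fun h => (pne h).symm
  refine ⟨2 ^ α * m, 2 ^ β * n₁, 2 ^ β * n₂, 2 ^ γ * m, ?_, ?_, ?_, ?_, ?_, ?_, ?_, ?_, ?_, ?_⟩
  · rw [colct m α hαN hmFS, colct n₁ β hβN hn₁FS]; exact hvαβ
  · rw [colct m α hαN hmFS, colct n₂ β hβN hn₂FS]; exact hvαβ
  · rw [colct m α hαN hmFS, colct m γ hγN hmFS]; exact hvαγ
  · exact pne' (by rw [cx, cy1]; exact L1)
  · exact pne (by rw [cx, cy2]; exact L2)
  · exact pne (by rw [cx, cz]; exact L3)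
  · exact pne (by rw [cy1, cy2]; exact L4)
  · exact pne (by rw [cy1, cz]; exact L5)
  · exact pne' (by rw [cy2, cz]; exact L6)
  · -- the equation
    rw [← PNat.coe_inj]
    simp only [PNat.mul_coe, PNat.add_coe, PNat.pow_coe]
    rw [c2, hmc]
    have hexp : (2 : ℕ) ^ α * 2 ^ β = 2 ^ γ * 2 ^ γ := by
      rw [← pow_add, ← pow_add]; congr 1; omega
    calc 2 ^ α * (n1c + n2c) * (2 ^ β * n1c + 2 ^ β * n2c)
        = (2 ^ α * 2 ^ β) * ((n1c + n2c) * (n1c + n2c)) := by ring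
      _ = (2 ^ γ * 2 ^ γ) * ((n1c + n2c) * (n1c + n2c)) := by rw [hexp]
      _ = (2 ^ γ * (n1c + n2c)) ^ 2 := by ring
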